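/- Let U, V be subspaces of a finite-dimensional real inner product space with orthogonal projections P_A, P_B, and set T = (I - P_B)(I - P_A). Then for every y, the limit of T^k y as k → ∞ exists, and y minus this limit lies in U + V. -/

import Mathlib

open Submodule Filter Topology

noncomputable def proj {E : Type*} [NormedAddCommGroup E] [InnerProductSpace ℝ E]
    [FiniteDimensional ℝ E] (U : Submodule ℝ E) : E →ₗ[ℝ] E :=
  U.subtype ∘ₗ (orthogonalProjection U).toLinearMap

section aux

variable {E : Type*} [NormedAddCommGroup E] [InnerProductSpace ℝ E] [FiniteDimensional ℝ E]

lemma proj_mem (K : Submodule ℝ E) (x : E) : proj K x ∈ K :=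
  (orthogonalProjection K x).2

lemma sub_proj_mem_orthogonal (K : Submodule ℝ E) (x : E) : x - proj K x ∈ Kᗮ :=
  Submodule.sub_starProjection_mem_orthogonal (K := K) x

lemma proj_pyth (K : Submodule ℝ E) (x : E) :
    ‖x‖ ^ 2 = ‖x - proj K x‖ ^ 2 + ‖proj K x‖ ^ 2 := by
  have h : inner ℝ (x - proj K x) (proj K x) = (0 : ℝ) := by
    rw [real_inner_comm]
    exact (sub_proj_mem_orthogonal K x) _ (proj_mem K x)
  have := norm_add_sq_real (x - proj K x) (proj K x)
  simp only [sub_add_cancel, h, mul_zero, add_zero] at this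
  linarith

lemma norm_sub_proj_le (K : Submodule ℝ E) (x : E) : ‖x - proj K x‖ ≤ ‖x‖ := by
  have := proj_pyth K x
  nlinarith [norm_nonneg (x - proj K x), norm_nonneg x, sq_nonneg (‖proj K x‖)]

lemma mem_orthogonal_of_norm_le (K : Submodule ℝ E) (x : E)
    (h : ‖x‖ ≤ ‖x - proj K x‖) : x ∈ Kᗮ ∧ proj K x = 0 := by
  have hp := proj_pyth K x
  have h1 : ‖x - proj K x‖ = ‖x‖ := le_antisymm (norm_sub_proj_le K x) h
  rw [h1] at hp
  have h2 : ‖proj K x‖ ^ 2 = 0 := by linarith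
  have h3 : proj K x = 0 := by
    simpa using (pow_eq_zero_iff (two_ne_zero)).mp h2
  refine ⟨?_, h3⟩
  have := sub_proj_mem_orthogonal K x
  rwa [h3, sub_zero] at this

lemma proj_eq_zero_of_mem_orthogonal (K : Submodule ℝ E) (x : E) (h : x ∈ Kᗮ) :
    proj K x = 0 := by
  simp [proj, orthogonalProjection_mem_subspace_orthogonalComplement_eq_zero h]

end aux

theorem stmt9 {E : Type*} [NormedAddCommGroup E] [InnerProductSpace ℝ E] [FiniteDimensional ℝ E]
    (U V : Submodule ℝ E) (y : E) :
    ∃ L : E, Tendsto (fun k : ℕ =>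
        ((((LinearMap.id - proj V) ∘ₗ (LinearMap.id - proj U) : Module.End ℝ E)) ^ k) y)
      atTop (𝓝 L) ∧ y - L ∈ U ⊔ V := by
  set T : Module.End ℝ E := (LinearMap.id - proj V) ∘ₗ (LinearMap.id - proj U) with hT
  set W : Submodule ℝ E := U ⊔ V with hW
  have hTapp : ∀ x : E, T x = (x - proj U x) - proj V (x - proj U x) := by
    intro x; simp [hT, LinearMap.sub_apply]
  -- invariance of W under T
  have hinv : ∀ x ∈ W, T x ∈ W := by
    intro x hx
    rw [hTapp]
    refine W.sub_mem (W.sub_mem hx ?_) ?_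
    · exact (le_sup_left : U ≤ W) (proj_mem U x)
    · exact (le_sup_right : V ≤ W) (proj_mem V _)
  -- strict contraction on W
  have hlt : ∀ x ∈ W, x ≠ 0 → ‖T x‖ < ‖x‖ := by
    intro x hx hx0
    by_contra h
    push_neg at h
    have h1 : ‖x‖ ≤ ‖x - proj U x‖ := by
      refine h.trans ?_
      rw [hTapp]; exact norm_sub_proj_le V _
    obtain ⟨hxU, hpU⟩ := mem_orthogonal_of_norm_le U x h1
    have h2 : ‖x‖ ≤ ‖x - proj V x‖ := by
      refine h.trans_eq ?_
      rw [hTapp, hpU]; simp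
    obtain ⟨hxV, -⟩ := mem_orthogonal_of_norm_le V x h2
    have hxW : x ∈ Wᗮ := by
      rw [hW, ← Submodule.inf_orthogonal]
      exact ⟨hxU, hxV⟩
    have : x ∈ W ⊓ Wᗮ := ⟨hx, hxW⟩
    rw [Submodule.inf_orthogonal_eq_bot, Submodule.mem_bot] at this
    exact hx0 this
  -- the restricted operator on W
  set Slin : W →ₗ[ℝ] W :=
    LinearMap.codRestrict W (T ∘ₗ W.subtype) (fun x => hinv x x.2) with hSlin
  set S : W →L[ℝ] W := LinearMap.toContinuousLinearMap Slin with hS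
  have hScoe : ∀ z : W, (S z : E) = T z := fun z => rfl
  -- operator norm < 1
  have hSnorm : ‖S‖ < 1 := by
    rcases subsingleton_or_nontrivial W with hsub | hnt
    · have h0 : ‖S‖ ≤ 0 := by
        refine S.opNorm_le_bound le_rfl fun x => ?_
        rw [Subsingleton.elim x 0]
        simp
      linarith
    · obtain ⟨x0, hx0, hmax⟩ :=
        (isCompact_sphere (0 : W) 1).exists_isMaxOn
          (NormedSpace.sphere_nonempty.mpr zero_le_one)
          (continuous_norm.comp S.continuous).continuousOn
      have hx0n : ‖x0‖ = 1 := by simpa using hx0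
      have hx0ne : x0 ≠ 0 := by
        intro h; rw [h] at hx0n; simp at hx0n
      have hc : ‖S x0‖ < 1 := by
        have hl := hlt (x0 : E) x0.2 (by simpa using hx0ne)
        calc ‖S x0‖ = ‖(S x0 : E)‖ := rfl
          _ = ‖T (x0 : E)‖ := by rw [hScoe]
          _ < ‖(x0 : E)‖ := hl
          _ = 1 := hx0n
      refine lt_of_le_of_lt (S.opNorm_le_bound (norm_nonneg _) ?_) hc
      intro x
      rcases eq_or_ne x 0 with rfl | hx
      · simp
      · have hxn : ‖x‖ ≠ 0 := norm_ne_zero_iff.mpr hx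
        have hu : (‖x‖⁻¹ • x) ∈ Metric.sphere (0 : W) 1 := by
          rw [mem_sphere_zero_iff_norm, norm_smul, norm_inv, norm_norm,
            inv_mul_cancel₀ hxn]
        have hmx : ‖S (‖x‖⁻¹ • x)‖ ≤ ‖S x0‖ := hmax hu
        rw [map_smul, norm_smul, norm_inv, norm_norm] at hmx
        have h2 := mul_le_mul_of_nonneg_left hmx (norm_nonneg x)
        rw [← mul_assoc, mul_inv_cancel₀ hxn, one_mul] at h2
        rw [mul_comm]
        exact h2
  -- decomposition y = a + b
  set a : E := proj W y with ha
  set b : E := y - a with hb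
  have haW : a ∈ W := proj_mem W y
  have hbW : b ∈ Wᗮ := sub_proj_mem_orthogonal W y
  have hTb : T b = b := by
    have hbU : b ∈ Uᗮ := Submodule.orthogonal_le (le_sup_left : U ≤ W) hbW
    have hbV : b ∈ Vᗮ := Submodule.orthogonal_le (le_sup_right : V ≤ W) hbW
    rw [hTapp, proj_eq_zero_of_mem_orthogonal U b hbU, sub_zero,
      proj_eq_zero_of_mem_orthogonal V b hbV, sub_zero]
  have hTkb : ∀ k : ℕ, (T ^ k) b = b := by
    intro k
    induction k with
    | zero => simp
    | succ n ih => rw [pow_succ, Module.End.mul_apply, hTb, ih]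
  have hTka : ∀ k : ℕ, (T ^ k) a = ((S ^ k) ⟨a, haW⟩ : E) := by
    intro k
    induction k with
    | zero => simp
    | succ n ih =>
      rw [pow_succ', Module.End.mul_apply, ih, pow_succ',
        ContinuousLinearMap.mul_apply, hScoe]
  have hTky : ∀ k : ℕ, (T ^ k) y = ((S ^ k) ⟨a, haW⟩ : E) + b := by
    intro k
    have hy : y = a + b := by rw [hb]; abel
    rw [hy, map_add, hTka, hTkb]
  refine ⟨b, ?_, ?_⟩
  · have hbound : ∀ k : ℕ, ‖(S ^ k) (⟨a, haW⟩ : W)‖ ≤ ‖S‖ ^ k * ‖(⟨a, haW⟩ : W)‖ := by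
      intro k
      induction k with
      | zero => simp
      | succ n ih =>
        rw [pow_succ', ContinuousLinearMap.mul_apply, pow_succ']
        calc ‖S ((S ^ n) (⟨a, haW⟩ : W))‖ ≤ ‖S‖ * ‖(S ^ n) (⟨a, haW⟩ : W)‖ :=
              S.le_opNorm _
          _ ≤ ‖S‖ * (‖S‖ ^ n * ‖(⟨a, haW⟩ : W)‖) :=
              mul_le_mul_of_nonneg_left ih (norm_nonneg S)
          _ = ‖S‖ * ‖S‖ ^ n * ‖(⟨a, haW⟩ : W)‖ := by ring
    have hg : Tendsto (fun k : ℕ => ‖S‖ ^ k * ‖(⟨a, haW⟩ : W)‖) atTop (𝓝 0) := by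
      have := tendsto_pow_atTop_nhds_zero_of_lt_one (norm_nonneg S) hSnorm
      simpa using this.mul_const ‖(⟨a, haW⟩ : W)‖
    have h0 : Tendsto (fun k : ℕ => ((S ^ k) ⟨a, haW⟩ : W)) atTop (𝓝 0) :=
      squeeze_zero_norm hbound hg
    have h1 : Tendsto (fun k : ℕ => (((S ^ k) ⟨a, haW⟩ : E) + b)) atTop (𝓝 ((0 : E) + b)) :=
      ((continuous_subtype_val.tendsto 0).comp h0).add tendsto_const_nhds
    simp only [zero_add] at h1
    refine h1.congr fun k => ?_
    rw [← hTky]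
  · simpa [hb] using haW
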